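/- Fix B, C > 0 and λ ∈ ℝ, and define on ℝ³×ℝ³×ℝ³ the functions ℋ(m,n,e) = (m₁² + m₂²)/(2B) + m₃²/(2C) + n₃, I₁(m,n,e) = B m₃, and I₂(m,n,e) = m·n + B λ e₃. Then ℋ, I₁ and I₂ are pairwise in involution with respect to the magnetic rod Poisson bracket: {ℋ, I₁} = {ℋ, I₂} = {I₁, I₂} = 0 identically. -/

import Mathlib

open Matrix Real

/-- The phase space of the magnetic rod: triples `(m, n, e)` of vectors in `ℝ³`. -/
abbrev RodPhase : Type := (Fin 3 → ℝ) × (Fin 3 → ℝ) × (Fin 3 → ℝ)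

/-- Gradient of `f : RodPhase → ℝ` with respect to the first (`m`) argument. -/
noncomputable def gradM (f : RodPhase → ℝ) (p : RodPhase) : Fin 3 → ℝ :=
  fun i => fderiv ℝ f p (Pi.single i 1, 0, 0)

/-- Gradient of `f : RodPhase → ℝ` with respect to the second (`n`) argument. -/
noncomputable def gradN (f : RodPhase → ℝ) (p : RodPhase) : Fin 3 → ℝ :=
  fun i => fderiv ℝ f p (0, Pi.single i 1, 0)

/-- Gradient of `f : RodPhase → ℝ` with respect to the third (`e`) argument. -/
noncomputable def gradE (f : RodPhase → ℝ) (p : RodPhase) : Fin 3 → ℝ :=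
  fun i => fderiv ℝ f p (0, 0, Pi.single i 1)

/-- The magnetic rod Poisson bracket
`{f,g}(m,n,e) = −m·(∇ₘf × ∇ₘg) − n·(∇ₘf × ∇ₙg + ∇ₙf × ∇ₘg)
  − e·(∇ₘf × ∇ₑg + ∇ₑf × ∇ₘg) − λ e·(∇ₙf × ∇ₙg)`. -/
noncomputable def rodBracket (lam : ℝ) (f g : RodPhase → ℝ) (p : RodPhase) : ℝ :=
  - (p.1 ⬝ᵥ (gradM f p ⨯₃ gradM g p))
  - (p.2.1 ⬝ᵥ (gradM f p ⨯₃ gradN g p + gradN f p ⨯₃ gradM g p))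
  - (p.2.2 ⬝ᵥ (gradM f p ⨯₃ gradE g p + gradE f p ⨯₃ gradM g p))
  - lam * (p.2.2 ⬝ᵥ (gradN f p ⨯₃ gradN g p))

noncomputable def Pm (i : Fin 3) : RodPhase →L[ℝ] ℝ :=
  (ContinuousLinearMap.proj i).comp
    (ContinuousLinearMap.fst ℝ (Fin 3 → ℝ) ((Fin 3 → ℝ) × (Fin 3 → ℝ)))

noncomputable def Pn (i : Fin 3) : RodPhase →L[ℝ] ℝ :=
  (ContinuousLinearMap.proj i).comp
    ((ContinuousLinearMap.fst ℝ (Fin 3 → ℝ) (Fin 3 → ℝ)).comp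
      (ContinuousLinearMap.snd ℝ (Fin 3 → ℝ) ((Fin 3 → ℝ) × (Fin 3 → ℝ))))

noncomputable def Pe (i : Fin 3) : RodPhase →L[ℝ] ℝ :=
  (ContinuousLinearMap.proj i).comp
    ((ContinuousLinearMap.snd ℝ (Fin 3 → ℝ) (Fin 3 → ℝ)).comp
      (ContinuousLinearMap.snd ℝ (Fin 3 → ℝ) ((Fin 3 → ℝ) × (Fin 3 → ℝ))))

lemma hasPm (i : Fin 3) (p : RodPhase) :
    HasFDerivAt (fun q : RodPhase => q.1 i) (Pm i) p := (Pm i).hasFDerivAt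

lemma hasPn (i : Fin 3) (p : RodPhase) :
    HasFDerivAt (fun q : RodPhase => q.2.1 i) (Pn i) p := (Pn i).hasFDerivAt

lemma hasPe (i : Fin 3) (p : RodPhase) :
    HasFDerivAt (fun q : RodPhase => q.2.2 i) (Pe i) p := (Pe i).hasFDerivAt

@[simp] lemma Pm_apply (i : Fin 3) (v : RodPhase) : Pm i v = v.1 i := rfl
@[simp] lemma Pn_apply (i : Fin 3) (v : RodPhase) : Pn i v = v.2.1 i := rfl
@[simp] lemma Pe_apply (i : Fin 3) (v : RodPhase) : Pe i v = v.2.2 i := rfl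

set_option maxHeartbeats 2000000 in
/-- For the inextensible, unshearable, isotropic magnetic rod, the
Hamiltonian `ℋ = (m₁² + m₂²)/(2B) + m₃²/(2C) + n₃`, the twist integral `I₁ = B m₃` and the
second integral `I₂ = m·n + B λ e₃` are pairwise in involution with respect to the magnetic
rod Poisson bracket. -/
theorem integrals_in_involution (B C lam : ℝ) (hB : 0 < B) (hC : 0 < C)
    (ℋ I₁ I₂ : RodPhase → ℝ)
    (hℋ : ∀ p : RodPhase,
      ℋ p = ((p.1 0) ^ 2 + (p.1 1) ^ 2) / (2 * B) + (p.1 2) ^ 2 / (2 * C) + p.2.1 2)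
    (hI₁ : ∀ p : RodPhase, I₁ p = B * p.1 2)
    (hI₂ : ∀ p : RodPhase, I₂ p = p.1 ⬝ᵥ p.2.1 + B * lam * p.2.2 2) :
    ∀ p : RodPhase,
      rodBracket lam ℋ I₁ p = 0 ∧ rodBracket lam ℋ I₂ p = 0 ∧ rodBracket lam I₁ I₂ p = 0 := by
  have hℋ' : ℋ = fun p : RodPhase =>
      (1 / (2 * B)) * (p.1 0 * p.1 0 + p.1 1 * p.1 1) + (1 / (2 * C)) * (p.1 2 * p.1 2) + p.2.1 2 := by
    funext p; rw [hℋ]; ring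
  have hI₁' : I₁ = fun p : RodPhase => B * p.1 2 := funext hI₁
  have hI₂' : I₂ = fun p : RodPhase =>
      p.1 0 * p.2.1 0 + p.1 1 * p.2.1 1 + p.1 2 * p.2.1 2 + B * lam * p.2.2 2 := by
    funext p; rw [hI₂]; simp [dotProduct, Fin.sum_univ_three]
  subst hℋ' hI₁' hI₂'
  intro p
  have Dℋ := (((((hasPm 0 p).mul (hasPm 0 p)).add ((hasPm 1 p).mul (hasPm 1 p))).const_mul (1/(2*B))).add
      (((hasPm 2 p).mul (hasPm 2 p)).const_mul (1/(2*C)))).add (hasPn 2 p)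
  have DI₁ := (hasPm 2 p).const_mul B
  have DI₂ := ((((hasPm 0 p).mul (hasPn 0 p)).add ((hasPm 1 p).mul (hasPn 1 p))).add
      ((hasPm 2 p).mul (hasPn 2 p))).add ((hasPe 2 p).const_mul (B * lam))
  have eℋ : fderiv ℝ (fun p : RodPhase =>
      (1 / (2 * B)) * (p.1 0 * p.1 0 + p.1 1 * p.1 1) + (1 / (2 * C)) * (p.1 2 * p.1 2) + p.2.1 2) p = _ := Dℋ.fderiv
  have eI₁ : fderiv ℝ (fun p : RodPhase => B * p.1 2) p = _ := DI₁.fderiv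
  have eI₂ : fderiv ℝ (fun p : RodPhase =>
      p.1 0 * p.2.1 0 + p.1 1 * p.2.1 1 + p.1 2 * p.2.1 2 + B * lam * p.2.2 2) p = _ := DI₂.fderiv
  set f := fun p : RodPhase =>
      (1 / (2 * B)) * (p.1 0 * p.1 0 + p.1 1 * p.1 1) + (1 / (2 * C)) * (p.1 2 * p.1 2) + p.2.1 2
    with hf
  set g := fun p : RodPhase => B * p.1 2 with hg
  set h := fun p : RodPhase =>
      p.1 0 * p.2.1 0 + p.1 1 * p.2.1 1 + p.1 2 * p.2.1 2 + B * lam * p.2.2 2 with hh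
  have gMf : gradM f p = ![p.1 0 / B, p.1 1 / B, p.1 2 / C] := by
    funext i
    show fderiv ℝ f p (Pi.single i 1, 0, 0) = _
    rw [hf, eℋ]
    fin_cases i <;>
      simp [ContinuousLinearMap.add_apply, ContinuousLinearMap.smul_apply, smul_eq_mul,
        Pi.single_apply] <;> ring
  have gNf : gradN f p = ![0, 0, 1] := by
    funext i
    show fderiv ℝ f p (0, Pi.single i 1, 0) = _
    rw [hf, eℋ]
    fin_cases i <;>
      simp [ContinuousLinearMap.add_apply, ContinuousLinearMap.smul_apply, smul_eq_mul,
        Pi.single_apply]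
  have gEf : gradE f p = ![0, 0, 0] := by
    funext i
    show fderiv ℝ f p (0, 0, Pi.single i 1) = _
    rw [hf, eℋ]
    fin_cases i <;>
      simp [ContinuousLinearMap.add_apply, ContinuousLinearMap.smul_apply, smul_eq_mul]
  have gMg : gradM g p = ![0, 0, B] := by
    funext i
    show fderiv ℝ g p (Pi.single i 1, 0, 0) = _
    rw [hg, eI₁]
    fin_cases i <;>
      simp [ContinuousLinearMap.smul_apply, smul_eq_mul, Pi.single_apply]
  have gNg : gradN g p = ![0, 0, 0] := by
    funext i
    show fderiv ℝ g p (0, Pi.single i 1, 0) = _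
    rw [hg, eI₁]
    fin_cases i <;> simp [ContinuousLinearMap.smul_apply, smul_eq_mul]
  have gEg : gradE g p = ![0, 0, 0] := by
    funext i
    show fderiv ℝ g p (0, 0, Pi.single i 1) = _
    rw [hg, eI₁]
    fin_cases i <;> simp [ContinuousLinearMap.smul_apply, smul_eq_mul]
  have gMh : gradM h p = ![p.2.1 0, p.2.1 1, p.2.1 2] := by
    funext i
    show fderiv ℝ h p (Pi.single i 1, 0, 0) = _
    rw [hh, eI₂]
    fin_cases i <;>
      simp [ContinuousLinearMap.add_apply, ContinuousLinearMap.smul_apply, smul_eq_mul,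
        Pi.single_apply]
  have gNh : gradN h p = ![p.1 0, p.1 1, p.1 2] := by
    funext i
    show fderiv ℝ h p (0, Pi.single i 1, 0) = _
    rw [hh, eI₂]
    fin_cases i <;>
      simp [ContinuousLinearMap.add_apply, ContinuousLinearMap.smul_apply, smul_eq_mul,
        Pi.single_apply]
  have gEh : gradE h p = ![0, 0, B * lam] := by
    funext i
    show fderiv ℝ h p (0, 0, Pi.single i 1) = _
    rw [hh, eI₂]
    fin_cases i <;>
      simp [ContinuousLinearMap.add_apply, ContinuousLinearMap.smul_apply, smul_eq_mul,
        Pi.single_apply]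
  clear eℋ eI₁ eI₂ Dℋ DI₁ DI₂ hf hg hh
  refine ⟨?_, ?_, ?_⟩ <;>
  · simp only [rodBracket, gMf, gNf, gEf, gMg, gNg, gEg, gMh, gNh, gEh, cross_apply,
      dotProduct, Fin.sum_univ_three, Pi.add_apply, Matrix.cons_val_zero, Matrix.cons_val_one,
      Matrix.head_cons, Matrix.cons_val_two, Matrix.tail_cons]
    field_simp
    ring
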